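/- Let E be a nonempty finite set, for each e ∈ E let A_e be a nonempty finite set, with the sets A_e pairwise disjoint, let A = ⋃_{e∈E} A_e, let C be a simple graph on vertex set A in which no edge joins two elements of the same set A_e, let d : A → ℝ, and let M > 0. Call a pair (x,y) with x : A → {0,1} and y : E(C) → {0,1} feasible if ∑_{p ∈ A_e} x(p) = 1 for every e ∈ E and x(p) + x(q) ≤ y(p,q) + 1 for every edge {p,q} of C. Then the minimum over all feasible pairs (x,y) of ∑_{{p,q} ∈ E(C)} y(p,q) + (1/M)·∑_{p ∈ A} d(p)·x(p) equals the minimum over all selections f of ov(f) + (1/M)·∑_{e ∈ E} d(f(e)). -/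

import Mathlib

open Finset in
/-- Correctness of the ILP formulation: with `E`, `Ae`, `A`, `C` as
before, `d : A → ℝ` and `M > 0`, the minimum over all feasible pairs `(x, y)`
(binary `x` choosing exactly one position in each `Ae e`, binary `y` on the edges of `C`
with `x p + x q ≤ y {p,q} + 1` on each edge `{p,q}`) of
`∑_{{p,q} ∈ E(C)} y {p,q} + (1/M) ∑_{p ∈ A} d p * x p`
equals the minimum over all selections `f` of `ov f + (1/M) ∑_{e ∈ E} d (f e)`. -/
theorem stmt2 {α E : Type*} [Fintype α] [DecidableEq α] [Fintype E] [DecidableEq E] [Nonempty E]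
    (Ae : E → Finset α) (hne : ∀ e, (Ae e).Nonempty)
    (hdisj : ∀ e g, e ≠ g → Disjoint (Ae e) (Ae g))
    (A : Finset α) (hA : A = Finset.univ.biUnion Ae)
    (C : SimpleGraph α) [DecidableRel C.Adj]
    (hCA : ∀ p q, C.Adj p q → p ∈ A ∧ q ∈ A)
    (hCin : ∀ e, ∀ p ∈ Ae e, ∀ q ∈ Ae e, ¬ C.Adj p q)
    (d : α → ℝ) (M : ℝ) (hM : 0 < M)
    (ov : (E → α) → ℕ)
    (hov : ∀ f : E → α, ov f = (Finset.univ.filter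
      (fun s : Sym2 E => ¬ s.IsDiag ∧ Sym2.map f s ∈ C.edgeFinset)).card) :
    ∃ v : ℝ,
      IsLeast {w : ℝ | ∃ (x : α → ℕ) (y : Sym2 α → ℕ),
          (∀ p, x p ≤ 1) ∧ (∀ s, y s ≤ 1) ∧
          (∀ e, ∑ p ∈ Ae e, x p = 1) ∧
          (∀ p q, C.Adj p q → x p + x q ≤ y s(p, q) + 1) ∧
          w = (∑ s ∈ C.edgeFinset, (y s : ℝ)) + (1 / M) * ∑ p ∈ A, d p * (x p : ℝ)} v ∧
      IsLeast {w : ℝ | ∃ f : E → α, (∀ e, f e ∈ Ae e) ∧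
          w = (ov f : ℝ) + (1 / M) * ∑ e : E, d (f e)} v := by
  classical
  set T : Finset (E → α) := Finset.univ.filter (fun f => ∀ e, f e ∈ Ae e) with hT
  have hTne : T.Nonempty := by
    refine ⟨fun e => (hne e).choose, ?_⟩
    simp only [hT, Finset.mem_filter, Finset.mem_univ, true_and]
    exact fun e => (hne e).choose_spec
  set val : (E → α) → ℝ := fun f => (ov f : ℝ) + (1 / M) * ∑ e : E, d (f e) with hval
  obtain ⟨f₀, hf₀T, hf₀min⟩ := T.exists_min_image val hTne
  have hmemT : ∀ f : E → α, f ∈ T ↔ ∀ e, f e ∈ Ae e := by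
    intro f; simp [hT]
  have hinj : ∀ f : E → α, (∀ e, f e ∈ Ae e) → Function.Injective f := by
    intro f hf e g heq
    by_contra hne'
    exact Finset.disjoint_left.mp (hdisj e g hne') (hf e) (heq ▸ hf g)
  have hdsum : ∀ (f : E → α) (x : α → ℕ), (∀ e, f e ∈ Ae e) → (∀ e, x (f e) = 1) →
      (∀ e, ∀ q ∈ Ae e, q ≠ f e → x q = 0) →
      ∑ p ∈ A, d p * (x p : ℝ) = ∑ e : E, d (f e) := by
    intro f x hf hx1 hx0
    rw [hA, Finset.sum_biUnion (fun e _ g _ hne' => hdisj e g hne')]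
    refine Finset.sum_congr rfl fun e _ => ?_
    rw [Finset.sum_eq_single_of_mem (f e) (hf e)
      (fun q hq hqne => by rw [hx0 e q hq hqne]; simp), hx1 e]
    simp
  -- Part A: from any selection, a feasible (x,y) with equal objective
  have hmem1 : ∀ f : E → α, (∀ e, f e ∈ Ae e) →
      val f ∈ {w : ℝ | ∃ (x : α → ℕ) (y : Sym2 α → ℕ),
        (∀ p, x p ≤ 1) ∧ (∀ s, y s ≤ 1) ∧
        (∀ e, ∑ p ∈ Ae e, x p = 1) ∧
        (∀ p q, C.Adj p q → x p + x q ≤ y s(p, q) + 1) ∧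
        val f = (∑ s ∈ C.edgeFinset, (y s : ℝ)) + (1 / M) * ∑ p ∈ A, d p * (x p : ℝ)} := by
    intro f hf
    have hfinj := hinj f hf
    set x : α → ℕ := fun p => if ∃ e, f e = p then 1 else 0 with hxdef
    have hx : ∀ p, x p ≤ 1 := by intro p; simp only [hxdef]; split <;> simp
    have hxf : ∀ e, x (f e) = 1 := by intro e; simp only [hxdef]; exact if_pos ⟨e, rfl⟩
    have hx0 : ∀ e, ∀ q ∈ Ae e, q ≠ f e → x q = 0 := by
      intro e q hq hqne
      simp only [hxdef, ite_eq_right_iff]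
      rintro ⟨g, rfl⟩
      rcases eq_or_ne g e with rfl | hge
      · exact absurd rfl hqne
      · exact absurd (hf g) (Finset.disjoint_left.mp (hdisj e g (Ne.symm hge)) hq)
    have hx1iff : ∀ p, x p = 1 ↔ ∃ e, f e = p := by
      intro p; simp only [hxdef]; split <;> simp_all
    set y : Sym2 α → ℕ := Sym2.lift ⟨fun p q => x p * x q, fun p q => mul_comm _ _⟩ with hydef
    have hymk : ∀ p q, y s(p, q) = x p * x q := fun p q => Sym2.lift_mk _ p q
    have hy : ∀ s, y s ≤ 1 := by
      intro s
      induction s using Sym2.ind with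
      | _ p q =>
        rw [hymk]
        calc x p * x q ≤ 1 * 1 := Nat.mul_le_mul (hx p) (hx q)
          _ = 1 := one_mul 1
    refine ⟨x, y, hx, hy, ?_, ?_, ?_⟩
    · intro e
      rw [Finset.sum_eq_single_of_mem (f e) (hf e) (fun q hq hqne => hx0 e q hq hqne)]
      exact hxf e
    · intro p q _
      rw [hymk]
      rcases Nat.le_one_iff_eq_zero_or_eq_one.mp (hx p) with hp | hp <;>
        rcases Nat.le_one_iff_eq_zero_or_eq_one.mp (hx q) with hq | hq <;>
        rw [hp, hq] <;> norm_num
    · -- objective equality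
      have hedge : ∑ s ∈ C.edgeFinset, y s = ov f := by
        rw [hov f]
        have h1 : ∑ s ∈ C.edgeFinset, y s
            = (C.edgeFinset.filter (fun s => y s = 1)).card := by
          rw [Finset.card_eq_sum_ones, Finset.sum_filter]
          refine Finset.sum_congr rfl fun s _ => ?_
          have := hy s
          split
          · omega
          · next h => omega
        rw [h1]
        symm
        refine Finset.card_bij (fun s _ => Sym2.map f s) ?_ ?_ ?_
        · intro s hs
          induction s using Sym2.ind with
          | _ e g =>
            simp only [Finset.mem_filter, Finset.mem_univ, true_and] at hs
            obtain ⟨hnd, hmem⟩ := hs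
            refine Finset.mem_filter.mpr ⟨hmem, ?_⟩
            show y (Sym2.map f s(e, g)) = 1
            rw [Sym2.map_pair_eq, hymk, hxf, hxf]
        · intro s₁ h₁ s₂ h₂ heq
          exact Sym2.map.injective hfinj heq
        · intro s hs
          induction s using Sym2.ind with
          | _ p q =>
            simp only [Finset.mem_filter] at hs
            obtain ⟨hmem, hy1⟩ := hs
            rw [hymk] at hy1
            have hxp : x p = 1 := by
              have h0 : x p ≠ 0 := by intro h; rw [h] at hy1; simp at hy1
              have := hx p; omega
            have hxq : x q = 1 := by
              have h0 : x q ≠ 0 := by intro h; rw [h] at hy1; simp at hy1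
              have := hx q; omega
            obtain ⟨e, rfl⟩ := (hx1iff p).mp hxp
            obtain ⟨g, rfl⟩ := (hx1iff q).mp hxq
            have hadj : C.Adj (f e) (f g) := by
              rw [SimpleGraph.mem_edgeFinset, SimpleGraph.mem_edgeSet] at hmem
              exact hmem
            have hne' : e ≠ g := fun h => C.irrefl (h ▸ hadj)
            refine ⟨s(e, g), ?_, ?_⟩
            · simp only [Finset.mem_filter, Finset.mem_univ, true_and]
              refine ⟨by simpa [Sym2.mk_isDiag_iff] using hne', ?_⟩
              rw [Sym2.map_pair_eq]
              exact hmem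
            · simp [Sym2.map_pair_eq]
      rw [hval]
      simp only
      rw [hdsum f x hf hxf hx0, ← hedge]
      push_cast
      ring
  -- Part B: from any feasible (x,y), a selection with smaller objective
  have hlb1 : ∀ (x : α → ℕ) (y : Sym2 α → ℕ),
      (∀ p, x p ≤ 1) → (∀ s, y s ≤ 1) →
      (∀ e, ∑ p ∈ Ae e, x p = 1) →
      (∀ p q, C.Adj p q → x p + x q ≤ y s(p, q) + 1) →
      ∃ f : E → α, (∀ e, f e ∈ Ae e) ∧
        val f ≤ (∑ s ∈ C.edgeFinset, (y s : ℝ)) + (1 / M) * ∑ p ∈ A, d p * (x p : ℝ) := by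
    intro x y hx hy hsum hcon
    have hex : ∀ e, ∃ p, p ∈ Ae e ∧ x p = 1 ∧ ∀ q ∈ Ae e, q ≠ p → x q = 0 := by
      intro e
      obtain ⟨p, hp, hxp⟩ := Finset.exists_ne_zero_of_sum_ne_zero
        (by rw [hsum e]; exact one_ne_zero)
      have hxp1 : x p = 1 := by have := hx p; omega
      refine ⟨p, hp, hxp1, ?_⟩
      have herase : ∑ q ∈ (Ae e).erase p, x q = 0 := by
        have := Finset.add_sum_erase (Ae e) x hp
        rw [hsum e] at this; omega
      intro q hq hqne
      exact Finset.sum_eq_zero_iff.mp herase q (Finset.mem_erase.mpr ⟨hqne, hq⟩)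
    choose f hfA hxf hx0 using hex
    have hfinj := hinj f hfA
    refine ⟨f, hfA, ?_⟩
    have hdeq := hdsum f x hfA hxf hx0
    have hovle : ov f ≤ ∑ s ∈ C.edgeFinset, y s := by
      rw [hov f]
      calc (Finset.univ.filter
            (fun s : Sym2 E => ¬ s.IsDiag ∧ Sym2.map f s ∈ C.edgeFinset)).card
          ≤ (C.edgeFinset.filter (fun s => 1 ≤ y s)).card := by
            refine Finset.card_le_card_of_injOn (Sym2.map f) ?_ ?_
            · intro s hs
              induction s using Sym2.ind with
              | _ e g =>
                simp only [Finset.mem_coe, Finset.mem_filter, Finset.mem_univ, true_and] at hs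
                obtain ⟨hnd, hmem⟩ := hs
                refine Finset.mem_filter.mpr ⟨hmem, ?_⟩
                have hadj : C.Adj (f e) (f g) := by
                  rw [Sym2.map_pair_eq, SimpleGraph.mem_edgeFinset,
                    SimpleGraph.mem_edgeSet] at hmem
                  exact hmem
                have hc := hcon (f e) (f g) hadj
                rw [hxf e, hxf g] at hc
                rw [Sym2.map_pair_eq]
                omega
            · intro s₁ _ s₂ _ heq
              exact Sym2.map.injective hfinj heq
        _ ≤ ∑ s ∈ C.edgeFinset.filter (fun s => 1 ≤ y s), y s := by
            rw [Finset.card_eq_sum_ones]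
            exact Finset.sum_le_sum fun s hs => (Finset.mem_filter.mp hs).2
        _ ≤ ∑ s ∈ C.edgeFinset, y s :=
            Finset.sum_le_sum_of_subset (Finset.filter_subset _ _)
    have hovle' : (ov f : ℝ) ≤ ∑ s ∈ C.edgeFinset, (y s : ℝ) := by
      calc (ov f : ℝ) ≤ ((∑ s ∈ C.edgeFinset, y s : ℕ) : ℝ) := Nat.cast_le.mpr hovle
        _ = ∑ s ∈ C.edgeFinset, (y s : ℝ) := by push_cast; ring
    rw [hval]
    simp only
    rw [hdeq]
    linarith
  refine ⟨val f₀, ⟨?_, ?_⟩, ⟨?_, ?_⟩⟩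
  · exact hmem1 f₀ ((hmemT f₀).mp hf₀T)
  · rintro w ⟨x, y, hx, hy, hsum, hcon, rfl⟩
    obtain ⟨f, hfA, hle⟩ := hlb1 x y hx hy hsum hcon
    exact le_trans (hf₀min f ((hmemT f).mpr hfA)) hle
  · exact ⟨f₀, (hmemT f₀).mp hf₀T, rfl⟩
  · rintro w ⟨f, hfA, rfl⟩
    exact hf₀min f ((hmemT f).mpr hfA)
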